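/- Let K be a finite simplicial complex with wscat K ≤ 1. Then K is strongly collapsible, i.e., scat K = 0. -/

import Mathlib

/-- An abstract simplicial complex on a vertex type `V`:
a downward-closed family of nonempty finite sets of vertices. -/
structure AbsSC (V : Type) where
  faces : Set (Finset V)
  nonempty_of_mem : ∀ σ ∈ faces, σ.Nonempty
  down_closed : ∀ σ ∈ faces, ∀ τ : Finset V, τ ⊆ σ → τ.Nonempty → τ ∈ faces

namespace AbsSC

variable {V W V' W' : Type} [DecidableEq V] [DecidableEq W]

/-- `f` is a simplicial map from `K` to `L`. -/
def IsSimplicial (K : AbsSC V) (L : AbsSC W) (f : V → W) : Prop :=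
  ∀ σ ∈ K.faces, σ.image f ∈ L.faces

/-- Two simplicial maps are contiguous. -/
def Contig (K : AbsSC V) (L : AbsSC W) (f g : V → W) : Prop :=
  IsSimplicial K L f ∧ IsSimplicial K L g ∧
    ∀ σ ∈ K.faces, σ.image f ∪ σ.image g ∈ L.faces

/-- Two maps are in the same contiguity class: they are connected by a
finite chain of pairwise contiguous simplicial maps. -/
def ContigClass (K : AbsSC V) (L : AbsSC W) : (V → W) → (V → W) → Prop :=
  Relation.ReflTransGen (Contig K L)

/-- `U` is a categorical subcomplex of `K`: the inclusion is in the
contiguity class of a constant map onto a vertex of `K`. -/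
def Categorical (K U : AbsSC V) : Prop :=
  U.faces ⊆ K.faces ∧ ∃ v : V, {v} ∈ K.faces ∧ ContigClass U K id (fun _ => v)

/-- `K` is covered by `n+1` categorical subcomplexes. -/
def CatCover (K : AbsSC V) (n : ℕ) : Prop :=
  ∃ U : Fin (n + 1) → AbsSC V, (∀ i, Categorical K (U i)) ∧
    ∀ σ ∈ K.faces, ∃ i, σ ∈ (U i).faces

/-- The simplicial Lusternik–Schnirelmann category of `K`. -/
noncomputable def scat (K : AbsSC V) : ℕ := sInf {n | CatCover K n}

/-- A maximal simplex of `K`. -/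
def MaximalFace (K : AbsSC V) (σ : Finset V) : Prop :=
  σ ∈ K.faces ∧ ∀ τ ∈ K.faces, σ ⊆ τ → σ = τ

/-- The vertex `v` is dominated (by some other vertex `v'`). -/
def Dominated (K : AbsSC V) (v : V) : Prop :=
  ∃ v' : V, v' ≠ v ∧ {v} ∈ K.faces ∧ {v'} ∈ K.faces ∧
    ∀ σ : Finset V, MaximalFace K σ → v ∈ σ → v' ∈ σ

/-- A minimal complex: no vertex is dominated. -/
def Minimal (K : AbsSC V) : Prop := ∀ v : V, ¬ Dominated K v

/-- Deleting (the open star of) a vertex. -/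
def delete (K : AbsSC V) (v : V) : AbsSC V where
  faces := {σ ∈ K.faces | v ∉ σ}
  nonempty_of_mem := fun σ h => K.nonempty_of_mem σ h.1
  down_closed := fun σ h τ hτ hne =>
    ⟨K.down_closed σ h.1 τ hτ hne, fun hv => h.2 (hτ hv)⟩

/-- An elementary strong collapse: removal of the open star of a dominated vertex. -/
def ElemStrongCollapse (K L : AbsSC V) : Prop :=
  ∃ v : V, Dominated K v ∧ L = K.delete v

/-- A complex consisting of a single vertex. -/
def IsPoint (K : AbsSC V) : Prop := ∃ v : V, K.faces = {{v}}

/-- `K` is strongly collapsible: it reduces to a single vertex by a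
sequence of elementary strong collapses. -/
def StronglyCollapsible (K : AbsSC V) : Prop :=
  ∃ L : AbsSC V, Relation.ReflTransGen ElemStrongCollapse K L ∧ IsPoint L

/-- `K` is covered by `n+1` subcomplexes, each strongly collapsible in itself. -/
def GCatCover (K : AbsSC V) (n : ℕ) : Prop :=
  ∃ U : Fin (n + 1) → AbsSC V,
    (∀ i, (U i).faces ⊆ K.faces ∧ StronglyCollapsible (U i)) ∧
    ∀ σ ∈ K.faces, ∃ i, σ ∈ (U i).faces

/-- The geometric simplicial category of `K`. -/
noncomputable def gscat (K : AbsSC V) : ℕ := sInf {n | GCatCover K n}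

/-- Strong homotopy equivalence of complexes. -/
def StrongEquiv (K : AbsSC V) (L : AbsSC W) : Prop :=
  ∃ (φ : V → W) (ψ : W → V), IsSimplicial K L φ ∧ IsSimplicial L K ψ ∧
    ContigClass K K (ψ ∘ φ) id ∧ ContigClass L L (φ ∘ ψ) id

/-- The barycentric subdivision: vertices are the simplices of `K`,
simplices are the chains of simplices of `K`. -/
def sd (K : AbsSC V) : AbsSC (Finset V) where
  faces := {S | S.Nonempty ∧ (∀ σ ∈ S, σ ∈ K.faces) ∧
    ∀ σ ∈ S, ∀ τ ∈ S, σ ⊆ τ ∨ τ ⊆ σ}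
  nonempty_of_mem := fun S hS => hS.1
  down_closed := fun S hS T hTS hT =>
    ⟨hT, fun σ hσ => hS.2.1 σ (hTS hσ),
      fun σ hσ τ hτ => hS.2.2 σ (hTS hσ) τ (hTS hτ)⟩

/-- The categorical product of simplicial complexes. -/
def prod (K : AbsSC V) (L : AbsSC W) : AbsSC (V × W) where
  faces := {σ | σ.Nonempty ∧ σ.image Prod.fst ∈ K.faces ∧ σ.image Prod.snd ∈ L.faces}
  nonempty_of_mem := fun σ h => h.1
  down_closed := fun σ h τ hτ hne =>
    ⟨hne, K.down_closed _ h.2.1 _ (Finset.image_subset_image hτ) (hne.image _),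
      L.down_closed _ h.2.2 _ (Finset.image_subset_image hτ) (hne.image _)⟩

/-- The `n`-fold categorical power of `K`. -/
def power (K : AbsSC V) (n : ℕ) : AbsSC (Fin n → V) where
  faces := {σ | σ.Nonempty ∧ ∀ j : Fin n, σ.image (fun f => f j) ∈ K.faces}
  nonempty_of_mem := fun σ h => h.1
  down_closed := by
    intro σ h τ hτ hne
    exact ⟨hne, fun j => K.down_closed _ (h.2 j) _ (Finset.image_subset_image hτ) (hne.image _)⟩

/-- The `n`-th fat wedge of a pointed complex `(K, v₀)` inside `Kⁿ`. -/
def fatWedge (K : AbsSC V) (n : ℕ) (v₀ : V) : AbsSC (Fin n → V) where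
  faces := {σ | σ ∈ (K.power n).faces ∧ ∃ j : Fin n, ∀ f ∈ σ, f j = v₀}
  nonempty_of_mem := fun σ h => (K.power n).nonempty_of_mem σ h.1
  down_closed := fun σ h τ hτ hne =>
    ⟨(K.power n).down_closed σ h.1 τ hτ hne,
      h.2.imp fun j hj f hf => hj f (hτ hf)⟩

/-- The part of a set of vertices of a disjoint union lying in the left factor. -/
noncomputable def sumLeft (σ : Finset (V ⊕ W)) : Finset V :=
  σ.preimage Sum.inl Sum.inl_injective.injOn

/-- The part of a set of vertices of a disjoint union lying in the right factor. -/
noncomputable def sumRight (σ : Finset (V ⊕ W)) : Finset W :=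
  σ.preimage Sum.inr Sum.inr_injective.injOn

/-- The simplicial join `K ∗ L`. -/
def join (K : AbsSC V) (L : AbsSC W) : AbsSC (V ⊕ W) where
  faces := {σ | σ.Nonempty ∧ ((sumLeft σ).Nonempty → sumLeft σ ∈ K.faces) ∧
    ((sumRight σ).Nonempty → sumRight σ ∈ L.faces)}
  nonempty_of_mem := fun σ h => h.1
  down_closed := by
    intro σ h τ hτ hne
    have hl : sumLeft τ ⊆ sumLeft σ := fun x hx => by
      rw [sumLeft, Finset.mem_preimage] at *; exact hτ hx
    have hr : sumRight τ ⊆ sumRight σ := fun x hx => by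
      rw [sumRight, Finset.mem_preimage] at *; exact hτ hx
    exact ⟨hne,
      fun h1 => K.down_closed _ (h.2.1 (h1.mono hl)) _ hl h1,
      fun h1 => L.down_closed _ (h.2.2 (h1.mono hr)) _ hr h1⟩

/-- A graph: a simplicial complex of dimension at most 1. -/
def IsGraph (G : AbsSC V) : Prop := ∀ σ ∈ G.faces, σ.card ≤ 2

/-- A connected (nonempty) complex: any two vertices are joined by an edge path. -/
def ConnectedG (G : AbsSC V) : Prop :=
  G.faces.Nonempty ∧
    ∀ u v : V, {u} ∈ G.faces → {v} ∈ G.faces →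
      ∃ (n : ℕ) (p : Fin (n + 1) → V), p 0 = u ∧ p (Fin.last n) = v ∧
        ∀ i : Fin n, ({p i.castSucc, p i.succ} : Finset V) ∈ G.faces

/-- A cycle of length `n` in a graph: `n ≥ 3` distinct vertices joined cyclically by edges. -/
def IsCycle (G : AbsSC V) (n : ℕ) (p : ZMod n → V) : Prop :=
  3 ≤ n ∧ Function.Injective p ∧
    ∀ i : ZMod n, ({p i, p (i + 1)} : Finset V) ∈ G.faces

/-- A forest: a graph containing no cycle. -/
def IsForest (G : AbsSC V) : Prop := ∀ (n : ℕ) (p : ZMod n → V), ¬ IsCycle G n p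

/-- A tree: a connected forest. -/
def IsTree (G : AbsSC V) : Prop := IsForest G ∧ ConnectedG G

/-- A decomposition of a graph into `k` edge-disjoint spanning forests. -/
def EdgeDisjointForestDecomp (G : AbsSC V) (k : ℕ) : Prop :=
  ∃ F : Fin k → AbsSC V,
    (∀ i, (F i).faces ⊆ G.faces ∧ IsForest (F i) ∧
      ∀ v : V, {v} ∈ G.faces → {v} ∈ (F i).faces) ∧
    (∀ σ ∈ G.faces, ∃ i, σ ∈ (F i).faces) ∧
    ∀ (i j : Fin k) (σ : Finset V), σ.card = 2 →
      σ ∈ (F i).faces → σ ∈ (F j).faces → i = j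

/-- The arboricity of a graph. -/
noncomputable def arboricity (G : AbsSC V) : ℕ :=
  sInf {k | EdgeDisjointForestDecomp G k}

end AbsSC

section Aux
namespace AbsSC

variable {V W X : Type} [DecidableEq V] [DecidableEq W] [DecidableEq X]

/-- Postcomposition with a simplicial map preserves contiguity classes. -/
lemma contigClass_postcomp {K : AbsSC V} {L : AbsSC W} {M : AbsSC X}
    {f g : V → W} {s : W → X} (hs : IsSimplicial L M s)
    (h : ContigClass K L f g) : ContigClass K M (s ∘ f) (s ∘ g) := by
  refine Relation.ReflTransGen.lift (fun u => s ∘ u) (fun a b hab => ?_) _ _ h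
  obtain ⟨ha, hb, hu⟩ := hab
  refine ⟨fun σ hσ => ?_, fun σ hσ => ?_, fun σ hσ => ?_⟩
  · rw [← Finset.image_image]; exact hs _ (ha σ hσ)
  · rw [← Finset.image_image]; exact hs _ (hb σ hσ)
  · rw [← Finset.image_image, ← Finset.image_image, ← Finset.image_union]
    exact hs _ (hu σ hσ)

/-- Precomposition with a simplicial map preserves contiguity classes. -/
lemma contigClass_precomp {K : AbsSC V} {L : AbsSC W} {M : AbsSC X}
    {f g : W → X} {r : V → W} (hr : IsSimplicial K L r)
    (h : ContigClass L M f g) : ContigClass K M (f ∘ r) (g ∘ r) := by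
  refine Relation.ReflTransGen.lift (fun u => u ∘ r) (fun a b hab => ?_) _ _ h
  obtain ⟨ha, hb, hu⟩ := hab
  refine ⟨fun σ hσ => ?_, fun σ hσ => ?_, fun σ hσ => ?_⟩
  · rw [← Finset.image_image]; exact ha _ (hr σ hσ)
  · rw [← Finset.image_image]; exact hb _ (hr σ hσ)
  · rw [← Finset.image_image (g := a), ← Finset.image_image (g := b)]
    exact hu _ (hr σ hσ)

/-- Restricting the domain preserves contiguity classes. -/
lemma contigClass_restrict {K K' : AbsSC V} {L : AbsSC W}
    {f g : V → W} (hsub : K'.faces ⊆ K.faces)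
    (h : ContigClass K L f g) : ContigClass K' L f g := by
  refine Relation.ReflTransGen.mono (fun a b hab => ?_) _ _ h
  exact ⟨fun σ hσ => hab.1 σ (hsub hσ), fun σ hσ => hab.2.1 σ (hsub hσ),
    fun σ hσ => hab.2.2 σ (hsub hσ)⟩

/-- Enlarging the target preserves contiguity classes. -/
lemma contigClass_target_mono {K : AbsSC V} {L L' : AbsSC W}
    {f g : V → W} (hsub : L.faces ⊆ L'.faces)
    (h : ContigClass K L f g) : ContigClass K L' f g := by
  refine Relation.ReflTransGen.mono (fun a b hab => ?_) _ _ h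
  exact ⟨fun σ hσ => hsub (hab.1 σ hσ), fun σ hσ => hsub (hab.2.1 σ hσ),
    fun σ hσ => hsub (hab.2.2 σ hσ)⟩

/-- Every face of a finite complex is contained in a maximal face. -/
lemma exists_maximalFace [Fintype V] (K : AbsSC V) {σ : Finset V}
    (hσ : σ ∈ K.faces) : ∃ τ, MaximalFace K τ ∧ σ ⊆ τ := by
  classical
  obtain ⟨τ, hτ, hmax⟩ := Finset.exists_max_image
    (Finset.univ.filter fun τ => τ ∈ K.faces ∧ σ ⊆ τ) Finset.card
    ⟨σ, by simp [hσ]⟩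
  simp only [Finset.mem_filter, Finset.mem_univ, true_and] at hτ hmax
  refine ⟨τ, ⟨hτ.1, fun ρ hρ hsub => ?_⟩, hτ.2⟩
  exact Finset.eq_of_subset_of_card_le hsub (hmax ρ ⟨hρ, hτ.2.trans hsub⟩)

/-- Rigidity: on a minimal complex, any map in the contiguity class of the
identity is the identity on vertices. -/
lemma eq_id_of_contigClass_id [Fintype V] {K : AbsSC V} (hmin : Minimal K)
    {f : V → V} (h : ContigClass K K f id) :
    ∀ v, {v} ∈ K.faces → f v = v := by
  induction h using Relation.ReflTransGen.head_induction_on with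
  | refl => intro v _; rfl
  | head hstep _ ih =>
    rename_i a c _
    intro v hv
    by_contra hne
    obtain ⟨ha, hc, hu⟩ := hstep
    refine hmin v ⟨a v, hne, hv, ?_, fun σ hσ hvσ => ?_⟩
    · have := ha _ hv
      rwa [Finset.image_singleton] at this
    · -- σ is a maximal face containing v; show a v ∈ σ
      have hcσ : σ.image c = σ := by
        rw [show σ.image c = σ.image id from Finset.image_congr
          (fun u hu => ih u (K.down_closed σ hσ.1 {u}
            (Finset.singleton_subset_iff.mpr hu) (Finset.singleton_nonempty u)))]
        exact Finset.image_id
      have hface := hu σ hσ.1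
      rw [hcσ] at hface
      have hsub : σ ⊆ σ.image a ∪ σ := Finset.subset_union_right
      have := hσ.2 _ hface hsub
      have hmem : a v ∈ σ.image a ∪ σ :=
        Finset.mem_union_left _ (Finset.mem_image_of_mem a hvσ)
      rwa [← this] at hmem

/-- The retraction collapsing a dominated vertex is simplicial onto the deletion. -/
lemma retraction_simplicial [Fintype V] {K : AbsSC V} {v v' : V}
    (hne : v' ≠ v)
    (hdom : ∀ σ : Finset V, MaximalFace K σ → v ∈ σ → v' ∈ σ) :
    IsSimplicial K (K.delete v) (fun u => if u = v then v' else u) := by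
  intro σ hσ
  obtain ⟨τ, hτ, hsub⟩ := K.exists_maximalFace hσ
  have himg : σ.image (fun u => if u = v then v' else u) ⊆ τ := by
    intro x hx
    obtain ⟨u, hu, rfl⟩ := Finset.mem_image.mp hx
    by_cases huv : u = v
    · simp only [huv, if_pos rfl]
      exact hdom τ hτ (hsub (huv ▸ hu))
    · simp only [if_neg huv]; exact hsub hu
  refine ⟨K.down_closed τ hτ.1 _ himg ((K.nonempty_of_mem σ hσ).image _), ?_⟩
  intro hvmem
  obtain ⟨u, _, heq⟩ := Finset.mem_image.mp hvmem
  by_cases huv : u = v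
  · rw [if_pos huv] at heq; exact hne heq
  · rw [if_neg huv] at heq; exact huv heq

/-- The retraction is contiguous to the identity on `K`. -/
lemma retraction_contig_id [Fintype V] {K : AbsSC V} {v v' : V}
    (hne : v' ≠ v)
    (hdom : ∀ σ : Finset V, MaximalFace K σ → v ∈ σ → v' ∈ σ) :
    Contig K K id (fun u => if u = v then v' else u) := by
  have hr := retraction_simplicial (K := K) hne hdom
  refine ⟨fun σ hσ => by rwa [Finset.image_id], fun σ hσ => (hr σ hσ).1,
    fun σ hσ => ?_⟩
  obtain ⟨τ, hτ, hsub⟩ := K.exists_maximalFace hσ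
  have himg : σ.image id ∪ σ.image (fun u => if u = v then v' else u) ⊆ τ := by
    rw [Finset.image_id]
    refine Finset.union_subset hsub ?_
    intro x hx
    obtain ⟨u, hu, rfl⟩ := Finset.mem_image.mp hx
    by_cases huv : u = v
    · simp only [huv, if_pos rfl]; exact hdom τ hτ (hsub (huv ▸ hu))
    · simp only [if_neg huv]; exact hsub hu
  refine K.down_closed τ hτ.1 _ himg ?_
  rw [Finset.image_id]
  exact (K.nonempty_of_mem σ hσ).mono Finset.subset_union_left

/-- A strongly collapsible complex has the identity in the contiguity class
of a constant map. -/
lemma exists_contig_const_of_stronglyCollapsible [Fintype V] {K : AbsSC V}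
    (h : StronglyCollapsible K) :
    ∃ w, {w} ∈ K.faces ∧ ContigClass K K id (fun _ => w) := by
  obtain ⟨M, hchain, hpt⟩ := h
  induction hchain using Relation.ReflTransGen.head_induction_on with
  | refl =>
    obtain ⟨w, hw⟩ := hpt
    refine ⟨w, hw ▸ rfl, Relation.ReflTransGen.single ?_⟩
    refine ⟨fun σ hσ => by rwa [Finset.image_id], fun σ hσ => ?_, fun σ hσ => ?_⟩
    · have : σ = {w} := by rw [hw] at hσ; exact hσ
      rw [this, Finset.image_singleton]; exact hw ▸ rfl
    · have : σ = {w} := by rw [hw] at hσ; exact hσ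
      subst this
      simpa [Finset.image_id, Finset.image_singleton, Finset.union_self] using hσ
  | head hstep _ ih =>
    rename_i a c _
    obtain ⟨v, ⟨v', hne, hv, hv', hdom⟩, rfl⟩ := hstep
    obtain ⟨w, hw, hcc⟩ := ih
    set r : V → V := fun u => if u = v then v' else u with hrdef
    have hrs : IsSimplicial a (a.delete v) r := retraction_simplicial hne hdom
    refine ⟨w, hw.1, ?_⟩
    have h1 : ContigClass a a id r :=
      Relation.ReflTransGen.single (retraction_contig_id hne hdom)
    have h2 : ContigClass (a.delete v) a id (fun _ => w) :=
      contigClass_target_mono (L := a.delete v) (L' := a) (fun σ hσ => hσ.1) hcc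
    have h3 : ContigClass a a (id ∘ r) ((fun _ => w) ∘ r) :=
      contigClass_precomp hrs h2
    exact h1.trans h3

/-- Main induction: the collapsing step. -/
lemma stronglyCollapsible_aux [Fintype V] :
    ∀ (n : ℕ) (K : AbsSC V), K.faces.ncard = n →
    ∀ v₀ : V, ({v₀} : Finset V) ∈ K.faces →
    ∀ δ : V → (Fin 2 → V), IsSimplicial K (K.fatWedge 2 v₀) δ →
    ContigClass K (K.power 2) δ (fun v _ => v) →
    StronglyCollapsible K := by
  intro n
  induction n using Nat.strong_induction_on with
  | _ n IH =>
  intro K hn v₀ h₀ δ hδ h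
  by_cases hmin : Minimal K
  · -- Minimal case: K is a point.
    have hproj : ∀ j : Fin 2, IsSimplicial (K.power 2) K (fun f => f j) :=
      fun j σ hσ => hσ.2 j
    have hδK : IsSimplicial K (K.power 2) δ := fun σ hσ => (hδ σ hσ).1
    have hdiag : ∀ j : Fin 2, ∀ v, {v} ∈ K.faces → δ v j = v := by
      intro j
      have hcc : ContigClass K K ((fun f => f j) ∘ δ)
          ((fun f => f j) ∘ (fun v (_ : Fin 2) => v)) :=
        contigClass_postcomp (hproj j) h
      exact eq_id_of_contigClass_id hmin hcc
    have hall : ∀ v, {v} ∈ K.faces → v = v₀ := by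
      intro v hv
      have := hδ {v} hv
      obtain ⟨_, j, hj⟩ := this
      have : δ v j = v₀ := hj (δ v) (by rw [Finset.image_singleton]; exact Finset.mem_singleton_self _)
      rw [hdiag j v hv] at this
      exact this
    refine ⟨K, Relation.ReflTransGen.refl, v₀, ?_⟩
    ext σ
    simp only [Set.mem_singleton_iff]
    constructor
    · intro hσ
      refine Finset.eq_singleton_iff_nonempty_unique_mem.mpr
        ⟨K.nonempty_of_mem σ hσ, fun u hu => ?_⟩
      exact hall u (K.down_closed σ hσ {u}
        (Finset.singleton_subset_iff.mpr hu) (Finset.singleton_nonempty u))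
    · rintro rfl; exact h₀
  · -- Non-minimal: collapse a dominated vertex and induct.
    rw [Minimal] at hmin
    push_neg at hmin
    obtain ⟨v, v', hne, hv, hv', hdom⟩ := hmin
    set L := K.delete v with hL
    set r : V → V := fun u => if u = v then v' else u with hrdef
    have hrs : IsSimplicial K L r := retraction_simplicial hne hdom
    have hrK : IsSimplicial K K r := fun σ hσ => (hrs σ hσ).1
    have hLsub : L.faces ⊆ K.faces := fun σ hσ => hσ.1
    have hssub : L.faces ⊂ K.faces := by
      refine ⟨hLsub, fun hsup => ?_⟩
      have : ({v} : Finset V) ∈ L.faces := hsup hv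
      exact this.2 (Finset.mem_singleton_self v)
    have hcard : L.faces.ncard < n := by
      rw [← hn]
      exact Set.ncard_lt_ncard hssub (Set.toFinite _)
    -- transported data
    have h₀' : ({r v₀} : Finset V) ∈ L.faces := by
      have := hrs {v₀} h₀
      rwa [Finset.image_singleton] at this
    set δ' : V → (Fin 2 → V) := fun u => r ∘ δ u with hδ'def
    have hδ' : IsSimplicial L (L.fatWedge 2 (r v₀)) δ' := by
      intro σ hσ
      obtain ⟨⟨hnem, hpow⟩, j, hj⟩ := hδ σ (hLsub hσ)
      refine ⟨⟨(K.nonempty_of_mem σ (hLsub hσ)).image _, fun j' => ?_⟩, j, ?_⟩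
      · have e1 : (σ.image δ').image (fun f => f j') =
            (σ.image (fun u => δ u j')).image r := by
          rw [Finset.image_image, Finset.image_image]
          rfl
        rw [e1]
        have : σ.image (fun u => δ u j') = (σ.image δ).image (fun f => f j') := by
          rw [Finset.image_image]; rfl
        rw [this]
        exact hrs _ (hpow j')
      · intro f hf
        obtain ⟨u, hu, rfl⟩ := Finset.mem_image.mp hf
        show r (δ u j) = r v₀
        rw [hj (δ u) (Finset.mem_image_of_mem δ hu)]
    have hrbar : IsSimplicial (K.power 2) (L.power 2) (fun f => r ∘ f) := by
      intro σ hσ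
      refine ⟨hσ.1.image _, fun j => ?_⟩
      have e1 : (σ.image (fun f => r ∘ f)).image (fun f => f j) =
          (σ.image (fun f => f j)).image r := by
        rw [Finset.image_image, Finset.image_image]; rfl
      rw [e1]
      exact hrs _ (hσ.2 j)
    have hstep1 : ContigClass L (K.power 2) δ (fun v _ => v) :=
      contigClass_restrict hLsub h
    have hstep2 : ContigClass L (L.power 2) δ' ((fun f => r ∘ f) ∘ (fun v (_ : Fin 2) => v)) :=
      contigClass_postcomp hrbar hstep1
    have hstep3 : ContigClass L (L.power 2) (fun u (_ : Fin 2) => r u) (fun u _ => u) := by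
      refine Relation.ReflTransGen.single ?_
      have hdiagL : IsSimplicial L (L.power 2) (fun u (_ : Fin 2) => u) := by
        intro σ hσ
        refine ⟨(L.nonempty_of_mem σ hσ).image _, fun j => ?_⟩
        rw [Finset.image_image]
        have he : ((fun f => f j) ∘ fun u (_ : Fin 2) => u) = fun u : V => u := rfl
        rw [he, Finset.image_id']
        exact hσ
      have hreq : ∀ σ ∈ L.faces, σ.image (fun u (_ : Fin 2) => r u) =
          σ.image (fun u (_ : Fin 2) => u) := by
        intro σ hσ
        refine Finset.image_congr fun u hu => ?_
        have huv : u ≠ v := fun he => hσ.2 (he ▸ hu)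
        simp only [hrdef, if_neg huv]
      refine ⟨fun σ hσ => ?_, hdiagL, fun σ hσ => ?_⟩
      · rw [hreq σ hσ]; exact hdiagL σ hσ
      · rw [hreq σ hσ, Finset.union_self]; exact hdiagL σ hσ
    have h' : ContigClass L (L.power 2) δ' (fun u (_ : Fin 2) => u) :=
      hstep2.trans hstep3
    have hSCL : StronglyCollapsible L :=
      IH _ hcard L rfl (r v₀) h₀' δ' hδ' h'
    obtain ⟨M, hchain, hpt⟩ := hSCL
    exact ⟨M, Relation.ReflTransGen.head ⟨v, ⟨v', hne, hv, hv', hdom⟩, rfl⟩ hchain, hpt⟩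

end AbsSC
end Aux

/-- if `wscat K ≤ 1`, i.e. the diagonal `Δ : K → K²` factors up
to contiguity class through the wedge `T²K`, then `K` is strongly collapsible
(equivalently `scat K = 0`). -/
theorem stronglyCollapsible_of_wscat_le_one {V : Type} [DecidableEq V] [Fintype V]
    (K : AbsSC V) (v₀ : V) (h₀ : ({v₀} : Finset V) ∈ K.faces)
    (δ : V → (Fin 2 → V))
    (hδ : AbsSC.IsSimplicial K (K.fatWedge 2 v₀) δ)
    (h : AbsSC.ContigClass K (K.power 2) δ (fun v _ => v)) :
    AbsSC.StronglyCollapsible K ∧ AbsSC.scat K = 0 := by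
  have hSC : AbsSC.StronglyCollapsible K :=
    AbsSC.stronglyCollapsible_aux K.faces.ncard K rfl v₀ h₀ δ hδ h
  refine ⟨hSC, ?_⟩
  obtain ⟨w, hw, hcc⟩ := AbsSC.exists_contig_const_of_stronglyCollapsible hSC
  have : AbsSC.CatCover K 0 :=
    ⟨fun _ => K, fun _ => ⟨subset_rfl, w, hw, hcc⟩, fun σ hσ => ⟨0, hσ⟩⟩
  rw [AbsSC.scat]
  exact Nat.sInf_eq_zero.mpr (Or.inl this)
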